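/- Let f : ℝⁿ → ℝ be a strongly convex quadratic f(x) = (1/2)xᵀQx + qᵀx with Q symmetric positive definite, and let c(x) = Ax − b be affine with A ∈ ℝ^{m×n}. Fix ω > 0, ρ > 0. Define the MALM map on λ ∈ ℝᵐ by: x(λ) = argmin_x [f(x) − λᵀc(x) + (1/(2(ω+ρ)))‖c(x) + ωλ‖²], followed by λ⁺ = λ − (c(x(λ)) + ωλ)/(ω+ρ). Then λ* ∈ ℝᵐ is a fixed point of this map if and only if x(λ*) is the unique minimizer of Φ_ω(x) = f(x) + (1/(2ω))‖Ax − b‖² and λ* = −(Ax(λ*) − b)/ω. -/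

import Mathlib

open RealInnerProductSpace

private lemma malm_aux_L_zero (L B : ℝ) (hB : 0 < B)
    (h : ∀ t : ℝ, 0 ≤ t * L + t ^ 2 * B) : L = 0 := by
  have h2 : (0:ℝ) < B + 1 := by linarith
  have h1 := h (-L / (2 * (B + 1)))
  have hd : (0:ℝ) < 2 * (B + 1) := by linarith
  have hd2 : (0:ℝ) < (2 * (B + 1)) ^ 2 := by positivity
  rw [div_pow, div_mul_eq_mul_div, div_mul_eq_mul_div] at h1
  rw [div_add_div _ _ (ne_of_gt hd) (ne_of_gt hd2), le_div_iff₀ (by positivity)] at h1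
  have hsq : L ^ 2 ≤ 0 := by
    nlinarith [sq_nonneg L, mul_nonneg (sq_nonneg L) hB.le,
      mul_nonneg (mul_nonneg (sq_nonneg L) hB.le) hB.le]
  have hsq0 : L ^ 2 = 0 := le_antisymm hsq (sq_nonneg L)
  exact sq_eq_zero_iff.mp hsq0

set_option maxHeartbeats 1000000 in
theorem malm_quadratic_fixed_point_iff
    (n m : ℕ)
    (Q : Matrix (Fin n) (Fin n) ℝ) (hQsym : Q.IsSymm) (hQpd : Q.PosDef)
    (q : EuclideanSpace ℝ (Fin n))
    (A : Matrix (Fin m) (Fin n) ℝ) (b : EuclideanSpace ℝ (Fin m))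
    (ω ρ : ℝ) (hω : 0 < ω) (hρ : 0 < ρ)
    (f : EuclideanSpace ℝ (Fin n) → ℝ)
    (hf : ∀ x, f x = (1 / 2) * ⟪x, Matrix.toEuclideanLin Q x⟫ + ⟪q, x⟫)
    (c : EuclideanSpace ℝ (Fin n) → EuclideanSpace ℝ (Fin m))
    (hc : ∀ x, c x = Matrix.toEuclideanLin A x - b)
    (Ψ : EuclideanSpace ℝ (Fin m) → EuclideanSpace ℝ (Fin n) → ℝ)
    (hΨ : ∀ lam x, Ψ lam x =
      f x - ⟪lam, c x⟫ + (1 / (2 * (ω + ρ))) * ‖c x + ω • lam‖ ^ 2)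
    (Φ : EuclideanSpace ℝ (Fin n) → ℝ)
    (hΦ : ∀ x, Φ x = f x + (1 / (2 * ω)) * ‖c x‖ ^ 2)
    (xmap : EuclideanSpace ℝ (Fin m) → EuclideanSpace ℝ (Fin n))
    (hxmap : ∀ lam x, Ψ lam (xmap lam) ≤ Ψ lam x)
    (lamstar : EuclideanSpace ℝ (Fin m)) :
    lamstar = lamstar - ((ω + ρ)⁻¹) • (c (xmap lamstar) + ω • lamstar) ↔
      ((∀ x, Φ (xmap lamstar) ≤ Φ x) ∧
       (∀ x, x ≠ xmap lamstar → Φ (xmap lamstar) < Φ x) ∧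
       lamstar = -(ω⁻¹) • c (xmap lamstar)) := by
  set T := Matrix.toEuclideanLin Q with hT
  set S := Matrix.toEuclideanLin A with hS
  set xs := xmap lamstar with hxs
  have hsym : ∀ u v : EuclideanSpace ℝ (Fin n), ⟪u, T v⟫ = ⟪v, T u⟫ := by
    intro u v
    simp only [hT, Matrix.toEuclideanLin_apply, PiLp.inner_apply, RCLike.inner_apply,
      conj_trivial, Matrix.mulVec,
      dotProduct, Finset.mul_sum, Finset.sum_mul]
    rw [Finset.sum_comm]
    apply Finset.sum_congr rfl; intro i _
    apply Finset.sum_congr rfl; intro j _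
    rw [← hQsym.apply i j]; ring
  have hpd : ∀ u : EuclideanSpace ℝ (Fin n), u ≠ 0 → 0 < ⟪u, T u⟫ := by
    intro u hu
    have := hQpd.re_dotProduct_pos (x := (WithLp.equiv 2 _ u)) (by simpa using hu)
    simpa [hT, Matrix.toEuclideanLin_apply, PiLp.inner_apply, dotProduct,
      Matrix.mulVec, mul_comm] using this
  have hC : ∀ y : EuclideanSpace ℝ (Fin n), c (xs + y) = c xs + S y := by
    intro y; simp only [hc, map_add]; abel
  constructor
  · intro hfix
    -- Fixed point gives c xs + ω • lamstar = 0
    have he : c xs + ω • lamstar = 0 := by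
      have h0 : ((ω + ρ)⁻¹) • (c xs + ω • lamstar) = 0 := sub_eq_self.mp hfix.symm
      rcases smul_eq_zero.mp h0 with h | h
      · exact absurd h (inv_ne_zero (by positivity))
      · exact h
    have hlam : lamstar = -(ω⁻¹) • c xs := by
      have h1 : ω • lamstar = -(c xs) := eq_neg_of_add_eq_zero_right he
      have : (ω⁻¹) • (ω • lamstar) = (ω⁻¹) • (-(c xs)) := by rw [h1]
      rw [smul_smul, inv_mul_cancel₀ hω.ne', one_smul] at this
      rw [this, smul_neg, neg_smul]
    have hstrict : ∀ x, x ≠ xs → Φ xs < Φ x := by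
      intro x hx
      set d := x - xs with hd
      have hdne : d ≠ 0 := sub_ne_zero.mpr hx
      have hxd : x = xs + d := by rw [hd]; abel
      set Lv : ℝ := ⟪d, T xs⟫ + ⟪q, d⟫ - ⟪lamstar, S d⟫ with hLv
      set Bv : ℝ := (1/2) * ⟪d, T d⟫ + (1/(2*(ω+ρ))) * ‖S d‖^2 with hBv
      -- expansion of Ψ along the line xs + t • d
      have hΨexp : ∀ t : ℝ, Ψ lamstar (xs + t • d) = Ψ lamstar xs + (t * Lv + t^2 * Bv) := by
        intro t
        have h1 : c (xs + t • d) = c xs + t • S d := by rw [hC, map_smul]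
        have h2 : c xs + t • S d + ω • lamstar = t • S d := by
          rw [add_right_comm, he, zero_add]
        have h3 : ‖t • S d‖^2 = t^2 * ‖S d‖^2 := by
          rw [norm_smul, mul_pow, Real.norm_eq_abs, sq_abs]
        have h4 : ⟪xs + t • d, T (xs + t • d)⟫
            = ⟪xs, T xs⟫ + 2*t*⟪d, T xs⟫ + t^2 * ⟪d, T d⟫ := by
          simp only [map_add, map_smul, inner_add_left, inner_add_right,
            real_inner_smul_left, real_inner_smul_right]
          linear_combination t * (hsym xs d)
        rw [hΨ, hΨ, hf, hf, h1, h2, h3, he, norm_zero, h4]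
        simp only [inner_add_right, real_inner_smul_right]
        rw [hLv, hBv]; ring
      have hmin : ∀ t : ℝ, 0 ≤ t * Lv + t^2 * Bv := by
        intro t
        have h := hxmap lamstar (xs + t • d)
        rw [hΨexp t] at h
        linarith
      have hTd : 0 < ⟪d, T d⟫ := hpd d hdne
      have hBpos : 0 < Bv := by
        have h5 : 0 ≤ (1/(2*(ω+ρ))) * ‖S d‖^2 := by positivity
        rw [hBv]; linarith
      have hLzero : Lv = 0 := malm_aux_L_zero Lv Bv hBpos hmin
      -- expansion of Φ
      have hinner2 : ⟪lamstar, S d⟫ = -(ω⁻¹) * ⟪c xs, S d⟫ := by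
        rw [hlam, neg_smul, inner_neg_left, real_inner_smul_left]; ring
      have hΦexp : Φ (xs + d) = Φ xs + ((1/2) * ⟪d, T d⟫ + (1/(2*ω)) * ‖S d‖^2) := by
        have h1 : c (xs + d) = c xs + S d := hC d
        have h4 : ⟪xs + d, T (xs + d)⟫ = ⟪xs, T xs⟫ + 2*⟪d, T xs⟫ + ⟪d, T d⟫ := by
          simp only [map_add, inner_add_left, inner_add_right]
          linear_combination hsym xs d
        have hLv0 : ⟪d, T xs⟫ + ⟪q, d⟫ + ω⁻¹ * ⟪c xs, S d⟫ = 0 := by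
          have h0 : ⟪d, T xs⟫ + ⟪q, d⟫ - ⟪lamstar, S d⟫ = 0 := by rw [← hLv]; exact hLzero
          linear_combination h0 + hinner2
        rw [hΦ, hΦ, hf, hf, h1, norm_add_sq_real, h4]
        simp only [inner_add_right]
        linear_combination hLv0
      rw [hxd, hΦexp]
      have h6 : 0 ≤ (1/(2*ω)) * ‖S d‖^2 := by positivity
      linarith
    refine ⟨fun x => ?_, hstrict, hlam⟩
    by_cases hx : x = xs
    · rw [hx]
    · exact (hstrict x hx).le
  · rintro ⟨-, -, hlam⟩
    have he : c xs + ω • lamstar = 0 := by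
      rw [hlam, neg_smul, smul_neg, smul_smul, mul_inv_cancel₀ hω.ne', one_smul,
        add_neg_cancel]
    rw [he, smul_zero, sub_zero]
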